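/- Let E be a nonempty set (of environments), d ≥ 1, and β : E → ℝ^d. Define P = { j ∈ {1, …, d} : there exist e, h ∈ E with β^e_j ≠ β^h_j }. Let R ⊆ {1, …, d} and γ : E → ℝ^d with γ^e_j = 0 for every e ∈ E and every j ∉ R, and suppose there exist e, h ∈ E with γ^e ≠ γ^h. If there exist c ∈ ℝ, α, η ∈ ℝ^d and λ ∈ ℝ with λ ≠ 0 such that c·β^e + α = λ·γ^e + η holds in ℝ^d for every e ∈ E, then P ⊆ R. -/
import Mathlib


/-- Coefficient-level form of Theorem 1 (identifiability of causal parents): let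
`P = {j : ∃ e h, β^e_j ≠ β^h_j}` be the set of coordinates with non-invariant
coefficients. If `γ^e` is supported on `R`, varies across environments, and
`c·β^e + α = λ·γ^e + η` holds for all `e` with `λ ≠ 0`, then `P ⊆ R`. -/
theorem parents_subset_R {E : Type*} [Nonempty E] {d : ℕ} (hd : 1 ≤ d)
    (β : E → Fin d → ℝ)
    (P : Set (Fin d)) (hP : P = {j : Fin d | ∃ e h : E, β e j ≠ β h j})
    (R : Set (Fin d)) (γ : E → Fin d → ℝ)
    (hγR : ∀ (e : E) (j : Fin d), j ∉ R → γ e j = 0)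
    (hγne : ∃ e h : E, γ e ≠ γ h)
    (himp : ∃ (c : ℝ) (α η : Fin d → ℝ) (lam : ℝ), lam ≠ 0 ∧
      ∀ e : E, c • β e + α = lam • γ e + η) :
    P ⊆ R := by
  obtain ⟨c, α, η, lam, hlam, heq⟩ := himp
  intro j hj
  rw [hP] at hj
  obtain ⟨e, h, hne⟩ := hj
  by_contra hjR
  have key : ∀ e' : E, c * β e' j + α j = η j := by
    intro e'
    have := congrFun (heq e') j
    simp [hγR e' j hjR] at this
    linarith
  rcases eq_or_ne c 0 with hc | hc
  · -- c = 0 forces γ constant, contradiction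
    obtain ⟨e1, h1, hγ⟩ := hγne
    apply hγ
    funext k
    have h1' := congrFun (heq e1) k
    have h2' := congrFun (heq h1) k
    simp [hc] at h1' h2'
    have : lam * γ e1 k = lam * γ h1 k := by linarith
    exact mul_left_cancel₀ hlam this
  · apply hne
    have h1 := key e
    have h2 := key h
    have : c * β e j = c * β h j := by linarith
    exact mul_left_cancel₀ hc this
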